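/- Assume N > 0, γ > 0, p̂ = N/γ, K > 0, c_i ≥ 0. If (p_1, …, p_n) ∈ [0, p̂]^n is a Nash equilibrium of the restricted game with utilities u_i^r, then the profile of supply functions S_i(p) = K·max(p − p_i, 0), i = 1, …, n, is a Nash equilibrium of the pay-as-bid auction game with strategy space A_K: for every i and every T ∈ A_K, u_i(T, S_{-i}) ≤ u_i(S_i, S_{-i}). -/

import Mathlib

open Set

/-- A feasible supply function on `[0, phat]`: continuous, nondecreasing, zero at zero. -/
def Feasible (phat : ℝ) (S : ℝ → ℝ) : Prop :=
  ContinuousOn S (Icc 0 phat) ∧ MonotoneOn S (Icc 0 phat) ∧ S 0 = 0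

/-- `p` is a market-clearing price for the profile `S` with demand `D(p) = N - γ p`. -/
def Clears (N γ : ℝ) {n : ℕ} (S : Fin n → ℝ → ℝ) (p : ℝ) : Prop :=
  p ∈ Icc 0 (N / γ) ∧ N - γ * p = ∑ i, S i p

/-- Pay-as-bid utility of an agent with cost coefficient `c`, supply `S`,
at clearing price `pstar`. -/
noncomputable def utility (c : ℝ) (S : ℝ → ℝ) (pstar : ℝ) : ℝ :=
  pstar * S pstar - (∫ p in (0:ℝ)..pstar, S p) - c * S pstar ^ 2

/-- `S` is `K`-Lipschitz on `[0, phat]`. -/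
def KLip (phat K : ℝ) (S : ℝ → ℝ) : Prop :=
  ∀ x ∈ Icc 0 phat, ∀ y ∈ Icc 0 phat, |S x - S y| ≤ K * |x - y|

/-- Restricted pay-as-bid utility at clearing price `phi` and own parameter `q`. -/
noncomputable def uir (K c phi q : ℝ) : ℝ :=
  phi * (K * max (phi - q) 0) - (K * max (phi - q) 0) ^ 2 / (2 * K)
    - c * (K * max (phi - q) 0) ^ 2

open intervalIntegral

lemma clear_unique (γ M Nv : ℝ) (hγ : 0 < γ) {n : ℕ} (f : Fin n → ℝ → ℝ)
    (hf : ∀ j, MonotoneOn (f j) (Icc 0 M))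
    (p q : ℝ) (hp : p ∈ Icc 0 M) (hq : q ∈ Icc 0 M)
    (hcp : Nv - γ * p = ∑ j, f j p) (hcq : Nv - γ * q = ∑ j, f j q) : p = q := by
  have key : ∀ a b : ℝ, a ∈ Icc 0 M → b ∈ Icc 0 M →
      Nv - γ * a = ∑ j, f j a → Nv - γ * b = ∑ j, f j b → a ≤ b → b ≤ a := by
    intro a b ha hb hca hcb hab
    have hsum : ∑ j, f j a ≤ ∑ j, f j b :=
      Finset.sum_le_sum (fun j _ => hf j ha hb hab)
    have : γ * b ≤ γ * a := by linarith
    exact le_of_mul_le_mul_left this hγ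
  rcases le_total p q with h | h
  · exact le_antisymm h (key p q hp hq hcp hcq h)
  · exact (le_antisymm h (key q p hq hp hcq hcp h)).symm

lemma integral_Kmax (K a b : ℝ) (ha : 0 ≤ a) (hb : 0 ≤ b) :
    ∫ p in (0:ℝ)..b, K * max (p - a) 0 = K * (max (b - a) 0)^2 / 2 := by
  have hcont : Continuous (fun p : ℝ => K * max (p - a) 0) := by
    fun_prop
  rcases le_total b a with h | h
  · rw [max_eq_right (by linarith : b - a ≤ 0)]
    have he : EqOn (fun p : ℝ => K * max (p - a) 0) (fun _ => 0) (uIcc 0 b) := by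
      intro p hp
      rw [uIcc_of_le hb] at hp
      simp [max_eq_right (by linarith [hp.2] : p - a ≤ 0)]
    rw [intervalIntegral.integral_congr he]
    simp
  · rw [max_eq_left (by linarith : 0 ≤ b - a)]
    rw [← intervalIntegral.integral_add_adjacent_intervals
      (hcont.intervalIntegrable 0 a) (hcont.intervalIntegrable a b)]
    have e1 : ∫ p in (0:ℝ)..a, K * max (p - a) 0 = 0 := by
      have he : EqOn (fun p : ℝ => K * max (p - a) 0) (fun _ => 0) (uIcc 0 a) := by
        intro p hp
        rw [uIcc_of_le ha] at hp
        simp [max_eq_right (by linarith [hp.2] : p - a ≤ 0)]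
      rw [intervalIntegral.integral_congr he]; simp
    have e2 : ∫ p in a..b, K * max (p - a) 0 = K * (b - a)^2 / 2 := by
      have he : EqOn (fun p : ℝ => K * max (p - a) 0) (fun p => K * (p - a)) (uIcc a b) := by
        intro p hp
        rw [uIcc_of_le h] at hp
        simp [max_eq_left (by linarith [hp.1] : 0 ≤ p - a)]
      rw [intervalIntegral.integral_congr he]
      rw [intervalIntegral.integral_const_mul]
      rw [intervalIntegral.integral_sub intervalIntegrable_id
        intervalIntegrable_const]
      rw [integral_id, integral_const]
      simp
      ring
    rw [e1, e2]; ring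


/-- a Nash equilibrium of the restricted game with utilities `u_i^r`
induces, via `S_i(p) = K · max (p - p_i) 0`, a Nash equilibrium of the pay-as-bid
auction game with strategy space `A_K`. -/
theorem stmt16 (n : ℕ) (N γ K : ℝ) (hN : 0 < N) (hγ : 0 < γ) (hK : 0 < K)
    (c : Fin n → ℝ) (hc : ∀ i, 0 ≤ c i)
    (φ : (Fin n → ℝ) → ℝ)
    (hφ : ∀ x : Fin n → ℝ, (∀ j, x j ∈ Icc 0 (N / γ)) →
      φ x ∈ Icc 0 (N / γ) ∧ N - γ * φ x = ∑ j, K * max (φ x - x j) 0)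
    (pv : Fin n → ℝ) (hpv : ∀ j, pv j ∈ Icc 0 (N / γ))
    (hNE : ∀ i : Fin n, ∀ t ∈ Icc (0:ℝ) (N / γ),
      uir K (c i) (φ (Function.update pv i t)) t ≤ uir K (c i) (φ pv) (pv i)) :
    ∀ i : Fin n, ∀ T, Feasible (N / γ) T → KLip (N / γ) K T →
      ∀ pstar q,
        Clears N γ (fun j => fun p => K * max (p - pv j) 0) pstar →
        Clears N γ (Function.update (fun j => fun p => K * max (p - pv j) 0) i T) q →
        utility (c i) T q ≤ utility (c i) (fun p => K * max (p - pv i) 0) pstar := by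
  intro i T hFeas hLip pstar q hclear hclearq
  obtain ⟨hTc, hTm, hT0⟩ := hFeas
  have hM : 0 < N / γ := div_pos hN hγ
  have h0M : (0:ℝ) ∈ Icc 0 (N / γ) := ⟨le_rfl, hM.le⟩
  obtain ⟨hpI, hpeq⟩ := hclear
  obtain ⟨hqI, hqeq⟩ := hclearq
  have hmono : ∀ a : ℝ, MonotoneOn (fun p => K * max (p - a) 0) (Icc 0 (N / γ)) :=
    fun a x _ y _ h =>
      mul_le_mul_of_nonneg_left (max_le_max (by linarith) le_rfl) hK.le
  -- φ pv = pstar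
  obtain ⟨hφI, hφeq⟩ := hφ pv hpv
  have hφpv : φ pv = pstar :=
    clear_unique γ (N / γ) N hγ (fun j => fun p => K * max (p - pv j) 0)
      (fun j => hmono (pv j)) _ _ hφI hpI hφeq hpeq
  set s := T q with hs
  set t := q - s / K with ht
  have hq0 : 0 ≤ q := hqI.1
  have hqM : q ≤ N / γ := hqI.2
  have hs0 : 0 ≤ s := by
    have := hTm h0M hqI hq0
    rw [hT0] at this
    exact this
  have hsKq : s ≤ K * q := by
    have h1 := hLip q hqI 0 h0M
    rw [hT0, sub_zero, sub_zero, abs_of_nonneg hs0, abs_of_nonneg hq0] at h1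
    exact h1
  have hdivq : s / K ≤ q := (div_le_iff₀ hK).2 (by linarith)
  have hdiv0 : 0 ≤ s / K := div_nonneg hs0 hK.le
  have ht0 : 0 ≤ t := by simp [ht]; linarith
  have htIcc : t ∈ Icc 0 (N / γ) := ⟨ht0, by simp [ht]; linarith⟩
  have hKmax : K * max (q - t) 0 = s := by
    have : q - t = s / K := by ring
    rw [this, max_eq_left hdiv0, mul_div_cancel₀ _ hK.ne']
  set x := Function.update pv i t with hx
  have hxI : ∀ j, x j ∈ Icc 0 (N / γ) := by
    intro j
    rcases eq_or_ne j i with rfl | hne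
    · simpa [hx] using htIcc
    · simpa [hx, Function.update_of_ne hne] using hpv j
  obtain ⟨hφxI, hφxeq⟩ := hφ x hxI
  have hqclear : N - γ * q = ∑ j, K * max (q - x j) 0 := by
    rw [hqeq]
    apply Finset.sum_congr rfl
    intro j _
    rcases eq_or_ne j i with rfl | hne
    · simp [hx, hKmax, hs]
    · simp [hx, Function.update_of_ne hne]
  have hφx : φ x = q :=
    clear_unique γ (N / γ) N hγ (fun j => fun p => K * max (p - x j) 0)
      (fun j => hmono (x j)) _ _ hφxI hqI hφxeq hqclear
  -- lower bound the integral of T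
  have hTint : IntervalIntegrable T MeasureTheory.volume 0 q := by
    have : ContinuousOn T (uIcc 0 q) := by
      rw [uIcc_of_le hq0]
      exact hTc.mono (Icc_subset_Icc le_rfl hqM)
    exact this.intervalIntegrable
  have hcont : Continuous (fun p : ℝ => K * max (p - t) 0) := by fun_prop
  have hmono_int : ∫ p in (0:ℝ)..q, K * max (p - t) 0 ≤ ∫ p in (0:ℝ)..q, T p := by
    apply intervalIntegral.integral_mono_on hq0 (hcont.intervalIntegrable 0 q) hTint
    intro p hp
    have hpIcc : p ∈ Icc 0 (N / γ) := ⟨hp.1, hp.2.trans hqM⟩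
    rcases le_total p t with h | h
    · have : max (p - t) 0 = 0 := max_eq_right (by linarith)
      rw [this, mul_zero]
      have := hTm h0M hpIcc hp.1
      rw [hT0] at this
      exact this
    · have h1 := hLip q hqI p hpIcc
      rw [abs_of_nonneg (sub_nonneg.2 hp.2)] at h1
      have h2 : s - T p ≤ K * (q - p) := (abs_le.1 h1).2
      have h3 : max (p - t) 0 = p - t := max_eq_left (by linarith)
      rw [h3]
      have h4 : K * (q - t) = s := by
        have : q - t = s / K := by ring
        rw [this, mul_div_cancel₀ _ hK.ne']
      nlinarith
  have hintval : ∫ p in (0:ℝ)..q, K * max (p - t) 0 = s ^ 2 / (2 * K) := by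
    rw [integral_Kmax K t q ht0 hq0]
    have : max (q - t) 0 = s / K := by
      rw [show q - t = s / K by ring, max_eq_left hdiv0]
    rw [this]
    field_simp
  have key1 : utility (c i) T q ≤ uir K (c i) q t := by
    unfold utility uir
    rw [hKmax]
    have : s ^ 2 / (2 * K) ≤ ∫ p in (0:ℝ)..q, T p := hintval ▸ hmono_int
    simp only [← hs]
    linarith
  have key3 : uir K (c i) pstar (pv i) =
      utility (c i) (fun p => K * max (p - pv i) 0) pstar := by
    unfold utility uir
    rw [integral_Kmax K (pv i) pstar (hpv i).1 hpI.1]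
    have hK' : (K:ℝ) ≠ 0 := hK.ne'
    field_simp
  calc utility (c i) T q ≤ uir K (c i) q t := key1
    _ = uir K (c i) (φ x) t := by rw [hφx]
    _ ≤ uir K (c i) (φ pv) (pv i) := hNE i t htIcc
    _ = uir K (c i) pstar (pv i) := by rw [hφpv]
    _ = _ := key3
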